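/- With probability at least 3/4, the sparsified vector satisfies ‖x̂‖₂ ≤ 1 + 2√(k/s). -/

import Mathlib

open MeasureTheory
open scoped Classical

theorem stmt5 {Ω : Type*} [MeasurableSpace Ω] (μ : Measure Ω) [IsProbabilityMeasure μ]
    (n : ℕ) (k s : ℝ) (hs : 0 < s) (x : Fin n → ℝ)
    (hx2 : Real.sqrt (∑ i, (x i) ^ 2) ≤ 1)
    (hk : ∑ i, |x i| ≤ Real.sqrt k)
    (p : Fin n → ℝ) (hp : ∀ i, p i = min (s * |x i| / (∑ j, |x j|)) 1)
    (E : Fin n → Set Ω) (hE : ∀ i, MeasurableSet (E i))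
    (hμE : ∀ i, μ (E i) = ENNReal.ofReal (p i))
    (hind : ProbabilityTheory.iIndepSet E μ)
    (xhat : Ω → Fin n → ℝ)
    (hxhat : ∀ ω i, xhat ω i = if ω ∈ E i then x i / p i else 0) :
    (3 / 4 : ENNReal) ≤
      μ {ω | Real.sqrt (∑ i, (xhat ω i) ^ 2) ≤ 1 + 2 * Real.sqrt (k / s)} := by
  classical
  set L := ∑ j, |x j| with hLdef
  have hL0 : 0 ≤ L := Finset.sum_nonneg fun i _ => abs_nonneg _
  have htarget_nonneg : 0 ≤ 1 + 2 * Real.sqrt (k / s) := by positivity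
  by_cases hLz : L = 0
  · -- degenerate case: x ≡ 0
    have hx0 : ∀ i, x i = 0 := by
      intro i
      have := (Finset.sum_eq_zero_iff_of_nonneg
        (fun j (_ : j ∈ Finset.univ) => abs_nonneg (x j))).mp hLz i (Finset.mem_univ i)
      exact abs_eq_zero.mp this
    have hxhat0 : ∀ ω i, xhat ω i = 0 := by
      intro ω i
      rw [hxhat, hx0 i]
      split <;> simp
    have hset : {ω | Real.sqrt (∑ i, (xhat ω i) ^ 2) ≤ 1 + 2 * Real.sqrt (k / s)} =
        Set.univ := by
      ext ω
      simp [hxhat0, htarget_nonneg]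
    rw [hset, measure_univ]
    exact ENNReal.div_le_of_le_mul (by norm_num)
  · have hLpos : 0 < L := lt_of_le_of_ne hL0 (Ne.symm hLz)
    have hsqk_pos : 0 < Real.sqrt k := lt_of_lt_of_le hLpos hk
    have hkpos : 0 < k := Real.sqrt_pos.mp hsqk_pos
    have hL2k : L ^ 2 ≤ k := by
      have := Real.sq_sqrt hkpos.le
      nlinarith [hk, hL0]
    -- pointwise bound
    have key : ∀ ω i, (xhat ω i) ^ 2 ≤ (x i) ^ 2 + (L / s) * |xhat ω i| := by
      intro ω i
      rw [hxhat]
      by_cases hEω : ω ∈ E i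
      · rw [if_pos hEω]
        by_cases hxi : x i = 0
        · simp [hxi]
        · have habs_pos : 0 < |x i| := abs_pos.mpr hxi
          rcases le_or_gt 1 (s * |x i| / L) with h1 | h1
          · have hpi : p i = 1 := by rw [hp i]; exact min_eq_right h1
            rw [hpi]
            have : 0 ≤ (L / s) * |x i / 1| := by positivity
            nlinarith
          · have hpi : p i = s * |x i| / L := by rw [hp i]; exact min_eq_left h1.le
            have hpi_pos : 0 < p i := by rw [hpi]; positivity
            have habs : |x i / p i| = L / s := by
              rw [abs_div, abs_of_pos hpi_pos, hpi]
              field_simp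
            have hsq : (x i / p i) ^ 2 = (L / s) ^ 2 := by
              rw [← sq_abs, habs]
            rw [hsq, habs]
            nlinarith [sq_nonneg (x i), sq_nonneg (L / s)]
      · rw [if_neg hEω]
        have : 0 ≤ (x i) ^ 2 + (L / s) * |(0 : ℝ)| := by positivity
        simpa using this
    -- |xhat ω i| as indicator
    have habs_eq : ∀ ω i, ENNReal.ofReal |xhat ω i| =
        (E i).indicator (fun _ => ENNReal.ofReal |x i / p i|) ω := by
      intro ω i
      rw [hxhat]
      by_cases hEω : ω ∈ E i
      · rw [if_pos hEω, Set.indicator_of_mem hEω]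
      · rw [if_neg hEω, Set.indicator_of_notMem hEω]
        simp
    have hp_nonneg : ∀ i, 0 ≤ p i := by
      intro i
      rw [hp i]
      have : 0 ≤ s * |x i| / (∑ j, |x j|) := by positivity
      exact le_min this zero_le_one
    -- the ENNReal-valued "ℓ¹ norm" random variable
    set g : Ω → ENNReal := fun ω => ∑ i, ENNReal.ofReal |xhat ω i| with hgdef
    have hg_meas : Measurable g := by
      apply Finset.measurable_sum
      intro i _
      have : (fun ω => ENNReal.ofReal |xhat ω i|) =
          (E i).indicator (fun _ => ENNReal.ofReal |x i / p i|) := by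
        ext ω; exact habs_eq ω i
      rw [this]
      exact Measurable.indicator measurable_const (hE i)
    -- expectation of g
    have hint : ∫⁻ ω, g ω ∂μ = ENNReal.ofReal L := by
      rw [hgdef]
      rw [lintegral_finset_sum]
      · have hterm : ∀ i, ∫⁻ ω, ENNReal.ofReal |xhat ω i| ∂μ = ENNReal.ofReal |x i| := by
          intro i
          calc ∫⁻ ω, ENNReal.ofReal |xhat ω i| ∂μ
              = ∫⁻ ω, (E i).indicator (fun _ => ENNReal.ofReal |x i / p i|) ω ∂μ := by
                congr 1; ext ω; exact habs_eq ω i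
            _ = ENNReal.ofReal |x i / p i| * μ (E i) := by
                rw [lintegral_indicator_const (hE i)]
            _ = ENNReal.ofReal |x i / p i| * ENNReal.ofReal (p i) := by rw [hμE i]
            _ = ENNReal.ofReal (|x i / p i| * p i) := by
                rw [ENNReal.ofReal_mul (abs_nonneg _)]
            _ = ENNReal.ofReal |x i| := by
                congr 1
                by_cases hpi : p i = 0
                · have hxi : x i = 0 := by
                    by_contra hxi
                    rw [hp i] at hpi
                    have h1 : 0 < s * |x i| / L := by
                      have : 0 < |x i| := abs_pos.mpr hxi
                      positivity
                    have h2 := lt_min h1 one_pos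
                    rw [hpi] at h2
                    exact lt_irrefl 0 h2
                  simp [hpi, hxi]
                · rw [abs_div, abs_of_nonneg (hp_nonneg i)]
                  field_simp
        rw [Finset.sum_congr rfl (fun i _ => hterm i)]
        rw [← ENNReal.ofReal_sum_of_nonneg (fun i _ => abs_nonneg (x i))]
      · intro i _
        have : (fun ω => ENNReal.ofReal |xhat ω i|) =
            (E i).indicator (fun _ => ENNReal.ofReal |x i / p i|) := by
          ext ω; exact habs_eq ω i
        rw [this]
        exact Measurable.indicator measurable_const (hE i)
    -- Markov
    set S : Set Ω := {ω | ENNReal.ofReal (4 * L) ≤ g ω} with hSdef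
    have hS_meas : MeasurableSet S := hg_meas measurableSet_Ici
    have hmarkov : ENNReal.ofReal (4 * L) * μ S ≤ ENNReal.ofReal L := by
      rw [← hint]
      exact mul_meas_ge_le_lintegral₀ hg_meas.aemeasurable _
    have hμS : μ S ≤ 1 / 4 := by
      have h4L : ENNReal.ofReal (4 * L) = 4 * ENNReal.ofReal L := by
        rw [ENNReal.ofReal_mul (by norm_num : (0:ℝ) ≤ 4)]
        norm_num
      rw [h4L] at hmarkov
      have hLne : ENNReal.ofReal L ≠ 0 := by
        simp [ENNReal.ofReal_eq_zero, not_le, hLpos]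
      have hLnetop : ENNReal.ofReal L ≠ ⊤ := ENNReal.ofReal_ne_top
      have h1 : ENNReal.ofReal L * (4 * μ S) ≤ ENNReal.ofReal L * 1 := by
        calc ENNReal.ofReal L * (4 * μ S) = 4 * ENNReal.ofReal L * μ S := by ring
          _ ≤ ENNReal.ofReal L := hmarkov
          _ = ENNReal.ofReal L * 1 := (mul_one _).symm
      have h2 : 4 * μ S ≤ 1 := (ENNReal.mul_le_mul_iff_right hLne hLnetop).mp h1
      rw [ENNReal.le_div_iff_mul_le (by norm_num) (by norm_num)]
      calc μ S * 4 = 4 * μ S := mul_comm _ _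
        _ ≤ 1 := h2
    -- Sᶜ ⊆ target set
    have hsub : Sᶜ ⊆ {ω | Real.sqrt (∑ i, (xhat ω i) ^ 2) ≤ 1 + 2 * Real.sqrt (k / s)} := by
      intro ω hω
      simp only [Set.mem_compl_iff, hSdef, Set.mem_setOf_eq, not_le] at hω
      have hY_nonneg : 0 ≤ ∑ i, |xhat ω i| := Finset.sum_nonneg fun i _ => abs_nonneg _
      have hgω : g ω = ENNReal.ofReal (∑ i, |xhat ω i|) := by
        rw [hgdef, ENNReal.ofReal_sum_of_nonneg (fun i _ => abs_nonneg _)]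
      rw [hgω] at hω
      have hY : ∑ i, |xhat ω i| < 4 * L := by
        by_contra h
        push_neg at h
        exact absurd (ENNReal.ofReal_le_ofReal h) (not_le.mpr hω)
      have hsum2 : ∑ i, (x i) ^ 2 ≤ 1 := by
        have hnn : 0 ≤ ∑ i, (x i) ^ 2 := Finset.sum_nonneg fun i _ => sq_nonneg _
        nlinarith [Real.sq_sqrt hnn, Real.sqrt_nonneg (∑ i, (x i) ^ 2)]
      have hbound : ∑ i, (xhat ω i) ^ 2 ≤ 1 + 4 * (k / s) := by
        calc ∑ i, (xhat ω i) ^ 2 ≤ ∑ i, ((x i) ^ 2 + (L / s) * |xhat ω i|) :=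
              Finset.sum_le_sum fun i _ => key ω i
          _ = (∑ i, (x i) ^ 2) + (L / s) * ∑ i, |xhat ω i| := by
              rw [Finset.sum_add_distrib, Finset.mul_sum]
          _ ≤ 1 + (L / s) * (4 * L) := by
              have hLs : 0 ≤ L / s := by positivity
              have := mul_le_mul_of_nonneg_left hY.le hLs
              linarith
          _ ≤ 1 + 4 * (k / s) := by
              have h := (div_le_div_iff_of_pos_right hs).mpr hL2k
              have heq : (L / s) * (4 * L) = 4 * (L ^ 2 / s) := by ring
              rw [heq]
              linarith
      set r := Real.sqrt (k / s) with hrdef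
      have hr2 : r ^ 2 = k / s := Real.sq_sqrt (by positivity)
      have hr0 : 0 ≤ r := Real.sqrt_nonneg _
      calc Real.sqrt (∑ i, (xhat ω i) ^ 2) ≤ Real.sqrt ((1 + 2 * r) ^ 2) := by
            apply Real.sqrt_le_sqrt
            nlinarith
        _ = 1 + 2 * r := Real.sqrt_sq (by positivity)
    -- conclude
    have hsum : μ S + μ Sᶜ = 1 := by
      rw [measure_add_measure_compl hS_meas]
      exact measure_univ
    have hq : (3 / 4 : ENNReal) + 1 / 4 = 1 := by
      rw [ENNReal.div_add_div_same]
      norm_num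
      exact ENNReal.div_self (by norm_num) (by norm_num)
    have hstep : (3 / 4 : ENNReal) + 1 / 4 ≤ μ Sᶜ + 1 / 4 := by
      rw [hq]
      calc (1 : ENNReal) = μ S + μ Sᶜ := hsum.symm
        _ ≤ 1 / 4 + μ Sᶜ := add_le_add_left hμS _
        _ = μ Sᶜ + 1 / 4 := add_comm _ _
    have h34 : (3 / 4 : ENNReal) ≤ μ Sᶜ :=
      (ENNReal.add_le_add_iff_right (by norm_num)).mp hstep
    exact h34.trans (measure_mono hsub)
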